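/- Let Φ be a real n×m matrix with full column rank, let 0 < σ ≤ Σ satisfy σ‖v‖₂ ≤ ‖Φv‖₂ ≤ Σ‖v‖₂ for all v ∈ ℝ^m, let y ∈ ℝ^n, and let x̂ be the unique minimizer of z ↦ ‖y − Φz‖₂. Then for every index i: σ²·x̂_i² ≤ (min over z with z_i = 0 of ‖y − Φz‖₂²) − ‖y − Φx̂‖₂² ≤ Σ²·x̂_i². In words, the increase in squared residual from deleting atom i is comparable, up to the squared extreme singular values, to the squared magnitude of the deleted coefficient. -/

import Mathlib

open Matrix

/-- The Euclidean (ℓ₂) norm of a finitely indexed real vector. -/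
noncomputable def euclNorm {ι : Type*} [Fintype ι] (v : ι → ℝ) : ℝ :=
  ‖(WithLp.equiv 2 (ι → ℝ)).symm v‖

lemma enorm_sq_eq {ι : Type*} [Fintype ι] (v : ι → ℝ) :
    euclNorm v ^ 2 = ∑ j, v j ^ 2 := by
  rw [euclNorm, EuclideanSpace.norm_eq, Real.sq_sqrt (by positivity)]
  simp [sq_abs]

/-- for a full-column-rank `Φ` with singular values between
`σlo` and `σhi`, the increase in squared residual from deleting atom `i` is
comparable, up to the squared extreme singular values, to `xhat i ^ 2`. -/
theorem deletion_increase_vs_coefficient_magnitude {n m : ℕ}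
    (Φ : Matrix (Fin n) (Fin m) ℝ)
    (hΦ : Function.Injective Φ.mulVec)
    (σlo σhi : ℝ) (hσlo : 0 < σlo) (hσ : σlo ≤ σhi)
    (hlow : ∀ v : Fin m → ℝ, σlo * euclNorm v ≤ euclNorm (Φ.mulVec v))
    (hhigh : ∀ v : Fin m → ℝ, euclNorm (Φ.mulVec v) ≤ σhi * euclNorm v)
    (y : Fin n → ℝ) (xhat : Fin m → ℝ)
    (hxhat : ∀ z : Fin m → ℝ, euclNorm (y - Φ.mulVec xhat) ≤ euclNorm (y - Φ.mulVec z))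
    (i : Fin m) :
    σlo ^ 2 * (xhat i) ^ 2 ≤
        sInf {c : ℝ | ∃ z : Fin m → ℝ, z i = 0 ∧ c = (euclNorm (y - Φ.mulVec z)) ^ 2}
          - (euclNorm (y - Φ.mulVec xhat)) ^ 2 ∧
      sInf {c : ℝ | ∃ z : Fin m → ℝ, z i = 0 ∧ c = (euclNorm (y - Φ.mulVec z)) ^ 2}
          - (euclNorm (y - Φ.mulVec xhat)) ^ 2 ≤ σhi ^ 2 * (xhat i) ^ 2 := by
  classical
  set e : (Fin n → ℝ) → EuclideanSpace ℝ (Fin n) :=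
    fun v => (WithLp.equiv 2 (Fin n → ℝ)).symm v with he
  set a : EuclideanSpace ℝ (Fin n) := e (y - Φ.mulVec xhat) with ha
  -- orthogonality of the residual
  have horth : ∀ v : Fin m → ℝ, @inner ℝ _ _ a (e (Φ.mulVec v)) = 0 := by
    intro v
    set u : EuclideanSpace ℝ (Fin n) := e (Φ.mulVec v) with hu
    have hnorm : ∀ t : ℝ, ‖a‖ ≤ ‖a - t • u‖ := by
      intro t
      have := hxhat (xhat + t • v)
      have heq : y - Φ.mulVec (xhat + t • v)
          = (y - Φ.mulVec xhat) - t • Φ.mulVec v := by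
        rw [Matrix.mulVec_add, Matrix.mulVec_smul]; abel
      have : euclNorm (y - Φ.mulVec xhat)
          ≤ euclNorm ((y - Φ.mulVec xhat) - t • Φ.mulVec v) := by
        rw [← heq]; exact this
      exact this
    have hq : ∀ t : ℝ,
        0 ≤ -2 * t * @inner ℝ _ _ a u + t ^ 2 * ‖u‖ ^ 2 := by
      intro t
      have h1 := hnorm t
      have h2 : ‖a‖ ^ 2 ≤ ‖a - t • u‖ ^ 2 := by
        have := norm_nonneg a; nlinarith
      have h3 : ‖a - t • u‖ ^ 2
          = ‖a‖ ^ 2 - 2 * (t * @inner ℝ _ _ a u) + t ^ 2 * ‖u‖ ^ 2 := by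
        rw [norm_sub_sq_real, inner_smul_right, norm_smul, Real.norm_eq_abs,
          mul_pow, sq_abs]
      nlinarith
    set c := @inner ℝ _ _ a u with hc
    set N := ‖u‖ ^ 2 with hN
    have hN0 : 0 ≤ N := by positivity
    have hpos : (0:ℝ) < N + 1 := by linarith
    have h := hq (c / (N + 1))
    have h2 : 0 ≤ (-2 * (c / (N + 1)) * c + (c / (N + 1)) ^ 2 * N) * (N + 1) ^ 2 :=
      mul_nonneg h (by positivity)
    have h3 : (-2 * (c / (N + 1)) * c + (c / (N + 1)) ^ 2 * N) * (N + 1) ^ 2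
        = -2 * c ^ 2 * (N + 1) + c ^ 2 * N := by
      field_simp
    have hc2 : c ^ 2 = 0 := le_antisymm (by nlinarith) (sq_nonneg c)
    exact sq_eq_zero_iff.mp hc2
  -- Pythagoras
  have hpyth : ∀ z : Fin m → ℝ,
      euclNorm (y - Φ.mulVec z) ^ 2
        = euclNorm (y - Φ.mulVec xhat) ^ 2 + euclNorm (Φ.mulVec (xhat - z)) ^ 2 := by
    intro z
    have heq : y - Φ.mulVec z = (y - Φ.mulVec xhat) + Φ.mulVec (xhat - z) := by
      rw [Matrix.mulVec_sub]; abel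
    have hadd : e (y - Φ.mulVec z) = a + e (Φ.mulVec (xhat - z)) := by
      rw [heq]; rfl
    show ‖e (y - Φ.mulVec z)‖ ^ 2 = ‖a‖ ^ 2 + ‖e (Φ.mulVec (xhat - z))‖ ^ 2
    rw [hadd, norm_add_sq_real, horth (xhat - z)]
    ring
  set S : Set ℝ :=
    {c : ℝ | ∃ z : Fin m → ℝ, z i = 0 ∧ c = (euclNorm (y - Φ.mulVec z)) ^ 2} with hS
  have hne : S.Nonempty := ⟨euclNorm (y - Φ.mulVec 0) ^ 2, 0, rfl, rfl⟩
  have hR := euclNorm (y - Φ.mulVec xhat) ^ 2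
  -- lower bound for all elements of S
  have hlb : ∀ c ∈ S,
      euclNorm (y - Φ.mulVec xhat) ^ 2 + σlo ^ 2 * xhat i ^ 2 ≤ c := by
    rintro c ⟨z, hzi, rfl⟩
    rw [hpyth z]
    have h1 : σlo * euclNorm (xhat - z) ≤ euclNorm (Φ.mulVec (xhat - z)) := hlow _
    have h2 : σlo ^ 2 * euclNorm (xhat - z) ^ 2 ≤ euclNorm (Φ.mulVec (xhat - z)) ^ 2 := by
      have hnn : 0 ≤ euclNorm (xhat - z) := norm_nonneg _
      have hmn : 0 ≤ σlo * euclNorm (xhat - z) := mul_nonneg hσlo.le hnn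
      have := mul_le_mul h1 h1 hmn (hmn.trans h1)
      nlinarith
    have h3 : xhat i ^ 2 ≤ euclNorm (xhat - z) ^ 2 := by
      rw [enorm_sq_eq]
      have heq : xhat i ^ 2 = (xhat - z) i ^ 2 := by simp [hzi]
      rw [heq]
      exact Finset.single_le_sum (f := fun j => (xhat - z) j ^ 2)
        (fun j _ => sq_nonneg _) (Finset.mem_univ i)
    nlinarith [sq_nonneg σlo]
  have hbdd : BddBelow S :=
    ⟨euclNorm (y - Φ.mulVec xhat) ^ 2 + σlo ^ 2 * xhat i ^ 2, hlb⟩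
  constructor
  · have := le_csInf hne hlb
    linarith
  · -- upper bound via z = update xhat i 0
    set z₀ : Fin m → ℝ := Function.update xhat i 0 with hz₀
    have hmem : euclNorm (y - Φ.mulVec z₀) ^ 2 ∈ S :=
      ⟨z₀, Function.update_self i 0 xhat, rfl⟩
    have hle := csInf_le hbdd hmem
    have hwsq : euclNorm (xhat - z₀) ^ 2 = xhat i ^ 2 := by
      rw [enorm_sq_eq, Finset.sum_eq_single i]
      · simp [hz₀]
      · intro b _ hb; simp [hz₀, Function.update_of_ne hb]
      · intro h; exact absurd (Finset.mem_univ i) h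
    have h1 : euclNorm (Φ.mulVec (xhat - z₀)) ≤ σhi * euclNorm (xhat - z₀) := hhigh _
    have h2 : euclNorm (Φ.mulVec (xhat - z₀)) ^ 2 ≤ σhi ^ 2 * euclNorm (xhat - z₀) ^ 2 := by
      have hnn : 0 ≤ euclNorm (xhat - z₀) := norm_nonneg _
      have hmn : 0 ≤ euclNorm (Φ.mulVec (xhat - z₀)) := norm_nonneg _
      have := mul_le_mul h1 h1 hmn (hmn.trans h1)
      nlinarith
    have := hpyth z₀
    rw [hwsq] at h2
    linarith
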